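/- For the complete graph K_k on k vertices and n ≥ k, the q-chromatic function satisfies M_q(K_k, n) = k! · binom(n,k)_q · q^{k(k-1)/2}. Equivalently, Σ q^{v_1+...+v_k}, summed over all k-tuples of pairwise distinct integers in {0,...,n-1}, equals k! binom(n,k)_q q^{k(k-1)/2}. -/

import Mathlib

/-- quantum integer (m)_q -/
def qInt {K : Type*} [Field K] (q : K) (m : ℕ) : K := ∑ j ∈ Finset.range m, q ^ j

/-- quantum factorial (m)!_q -/
def qFact {K : Type*} [Field K] (q : K) (m : ℕ) : K := ∏ i ∈ Finset.range m, qInt q (i + 1)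

/-- Gaussian binomial coefficient, defined via quantum factorials. -/
def qBinom {K : Type*} [Field K] (q : K) (n k : ℕ) : K :=
  qFact q n / (qFact q k * qFact q (n - k))

lemma qFact_zero {K : Type*} [Field K] (q : K) : qFact q 0 = 1 := by
  simp [qFact]

lemma qFact_succ {K : Type*} [Field K] (q : K) (m : ℕ) :
    qFact q (m + 1) = qFact q m * qInt q (m + 1) :=
  Finset.prod_range_succ _ _

lemma qFact_ne_zero {K : Type*} [Field K] {q : K} {m n : ℕ} (hmn : m ≤ n)
    (hq : ∀ i : ℕ, 1 ≤ i → i ≤ n → qInt q i ≠ 0) : qFact q m ≠ 0 := by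
  unfold qFact
  rw [Finset.prod_ne_zero_iff]
  intro i hi
  rw [Finset.mem_range] at hi
  exact hq (i + 1) (by omega) (by omega)

lemma qInt_add {K : Type*} [Field K] (q : K) (a b : ℕ) :
    qInt q (a + b) = qInt q a + q ^ a * qInt q b := by
  unfold qInt
  rw [Finset.sum_range_add, Finset.mul_sum]
  simp [pow_add]

lemma qBinom_zero {K : Type*} [Field K] {q : K} {n : ℕ} (h : qFact q n ≠ 0) :
    qBinom q n 0 = 1 := by
  simp [qBinom, qFact_zero, div_self h]

lemma qBinom_self {K : Type*} [Field K] {q : K} {n : ℕ} (h : qFact q n ≠ 0) :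
    qBinom q n n = 1 := by
  simp [qBinom, qFact_zero, div_self h]

lemma qBinom_pascal {K : Type*} [Field K] (q : K) {n k : ℕ} (hk : k + 1 ≤ n)
    (hq : ∀ i : ℕ, 1 ≤ i → i ≤ n → qInt q i ≠ 0) :
    qBinom q (n + 1) (k + 1) = qBinom q n (k + 1) + q ^ (n - k) * qBinom q n k := by
  have h1 : qFact q (n + 1) = qFact q n * qInt q (n + 1) := qFact_succ q n
  have h2 : qFact q (k + 1) = qFact q k * qInt q (k + 1) := qFact_succ q k
  have hnk : n - k = (n - (k + 1)) + 1 := by omega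
  have h3 : qFact q (n - k) = qFact q (n - (k + 1)) * qInt q (n - k) := by
    rw [hnk]; exact qFact_succ q _
  have hsplit : qInt q (n + 1) = qInt q (n - k) + q ^ (n - k) * qInt q (k + 1) := by
    have h : n + 1 = (n - k) + (k + 1) := by omega
    rw [h, qInt_add]
  have ha : qFact q n ≠ 0 := qFact_ne_zero le_rfl hq
  have hb : qFact q k ≠ 0 := qFact_ne_zero (by omega) hq
  have hc : qFact q (n - (k + 1)) ≠ 0 := qFact_ne_zero (by omega) hq
  have hx : qInt q (k + 1) ≠ 0 := hq _ (by omega) (by omega)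
  have hy : qInt q (n - k) ≠ 0 := hq _ (by omega) (by omega)
  unfold qBinom
  rw [show n + 1 - (k + 1) = n - k from by omega, h1, h2, h3, hsplit]
  field_simp

lemma tri (m : ℕ) : m * (m - 1) / 2 * 2 = m * (m - 1) := by
  apply Nat.div_mul_cancel
  rcases m with _ | m
  · simp
  · simpa [Nat.mul_comm] using (Nat.even_mul_succ_self m).two_dvd

lemma key_subsets {K : Type*} [Field K] (q : K) :
    ∀ n k : ℕ, k ≤ n → (∀ i : ℕ, 1 ≤ i → i ≤ n → qInt q i ≠ 0) →
      ∑ S ∈ (Finset.range n).powersetCard k, q ^ (∑ x ∈ S, x) =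
        qBinom q n k * q ^ (k * (k - 1) / 2) := by
  intro n
  induction n with
  | zero =>
    intro k hk hq
    interval_cases k
    simp [qBinom, qFact_zero]
  | succ n ih =>
    intro k hk hq
    have hq' : ∀ i : ℕ, 1 ≤ i → i ≤ n → qInt q i ≠ 0 := fun i h1 h2 => hq i h1 (by omega)
    match k with
    | 0 =>
      simp only [Finset.powersetCard_zero, Finset.sum_singleton, Finset.sum_empty, pow_zero]
      rw [qBinom_zero (qFact_ne_zero le_rfl hq)]
      simp
    | (k + 1) =>
      have hnotmem : n ∉ Finset.range n := by simp
      rw [Finset.range_add_one, Finset.powersetCard_succ_insert hnotmem]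
      have hdisj : Disjoint ((Finset.range n).powersetCard (k + 1))
          (((Finset.range n).powersetCard k).image (insert n)) := by
        rw [Finset.disjoint_left]
        intro S hS hS'
        rw [Finset.mem_powersetCard] at hS
        obtain ⟨T, hT, rfl⟩ := Finset.mem_image.mp hS'
        have := hS.1 (Finset.mem_insert_self n T)
        simp at this
      rw [Finset.sum_union hdisj]
      have himg : ∑ S ∈ ((Finset.range n).powersetCard k).image (insert n),
          q ^ (∑ x ∈ S, x) = q ^ n * ∑ S ∈ (Finset.range n).powersetCard k,
            q ^ (∑ x ∈ S, x) := by
        rw [Finset.sum_image, Finset.mul_sum]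
        · refine Finset.sum_congr rfl fun S hS => ?_
          rw [Finset.mem_powersetCard] at hS
          have hn : n ∉ S := fun h => by simpa using hS.1 h
          rw [Finset.sum_insert hn, pow_add]
        · intro S hS T hT hST
          rw [Finset.mem_coe, Finset.mem_powersetCard] at hS hT
          have hnS : n ∉ S := fun h => by simpa using hS.1 h
          have hnT : n ∉ T := fun h => by simpa using hT.1 h
          ext x
          constructor
          · intro hx
            have : x ∈ insert n T := hST ▸ Finset.mem_insert_of_mem hx
            rcases Finset.mem_insert.mp this with h | h
            · exact absurd (h ▸ hx) hnS
            · exact h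
          · intro hx
            have : x ∈ insert n S := hST ▸ Finset.mem_insert_of_mem hx
            rcases Finset.mem_insert.mp this with h | h
            · exact absurd (h ▸ hx) hnT
            · exact h
      rw [himg]
      by_cases hkn : k + 1 ≤ n
      · rw [ih (k + 1) hkn hq', ih k (by omega) hq', qBinom_pascal q hkn hq']
        have hexp : n + k * (k - 1) / 2 = (n - k) + (k + 1) * (k + 1 - 1) / 2 := by
          have h2 := tri k
          have h3 := tri (k + 1)
          have h4 : (k + 1) * k = k * (k - 1) + 2 * k := by
            cases k with
            | zero => simp
            | succ m => simp only [Nat.succ_sub_one]; ring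
          simp only [Nat.add_sub_cancel] at h3 ⊢
          omega
        have hstep : q ^ n * (qBinom q n k * q ^ (k * (k - 1) / 2)) =
            q ^ (n - k) * qBinom q n k * q ^ ((k + 1) * (k + 1 - 1) / 2) := by
          calc q ^ n * (qBinom q n k * q ^ (k * (k - 1) / 2))
              = qBinom q n k * (q ^ n * q ^ (k * (k - 1) / 2)) := by ring
            _ = qBinom q n k * (q ^ (n - k) * q ^ ((k + 1) * (k + 1 - 1) / 2)) := by
                rw [← pow_add, ← pow_add, hexp]
            _ = _ := by ring
        rw [hstep]
        ring
      · -- k = n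
        have hk' : k = n := by omega
        have hempty : (Finset.range n).powersetCard (k + 1) = ∅ := by
          rw [Finset.powersetCard_eq_empty]
          simp; omega
        rw [hempty, Finset.sum_empty, ih k (by omega) hq',
          hk', qBinom_self (n := n + 1) (qFact_ne_zero le_rfl hq),
          qBinom_self (n := n) (qFact_ne_zero le_rfl hq')]
        have hexp : n + n * (n - 1) / 2 = (n + 1) * (n + 1 - 1) / 2 := by
          have h2 := tri n
          have h3 := tri (n + 1)
          have h4 : (n + 1) * n = n * (n - 1) + 2 * n := by
            cases n with
            | zero => simp
            | succ m => simp only [Nat.succ_sub_one]; ring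
          simp only [Nat.add_sub_cancel] at h3 ⊢
          omega
        rw [zero_add, one_mul, one_mul, ← pow_add, hexp]

lemma fiber_card (k n : ℕ) (S : Finset (Fin n)) (hS : S.card = k) :
    (Finset.univ.filter (fun v : Fin k → Fin n =>
      Function.Injective v ∧ Finset.image v Finset.univ = S)).card = k.factorial := by
  classical
  have hcard : Fintype.card {x // x ∈ S} = Fintype.card (Fin k) := by
    simp [Fintype.card_coe, hS]
  have key : ∀ v : Fin k → Fin n, Finset.image v Finset.univ = S → ∀ i, v i ∈ S :=
    fun v h i => h ▸ Finset.mem_image_of_mem v (Finset.mem_univ i)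
  let e : {v : Fin k → Fin n // Function.Injective v ∧ Finset.image v Finset.univ = S} ≃
      (Fin k ≃ {x // x ∈ S}) :=
  { toFun := fun v => Equiv.ofBijective (fun i => ⟨v.1 i, key v.1 v.2.2 i⟩)
      ((Fintype.bijective_iff_injective_and_card _).2
        ⟨fun a b hab => v.2.1 (congrArg Subtype.val hab), hcard.symm⟩)
    invFun := fun e => ⟨fun i => (e i : Fin n),
      fun a b hab => e.injective (Subtype.ext hab), by
        ext x
        simp only [Finset.mem_image, Finset.mem_univ, true_and]
        constructor
        · rintro ⟨i, rfl⟩; exact (e i).2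
        · intro hx; exact ⟨e.symm ⟨x, hx⟩, by simp⟩⟩
    left_inv := fun v => Subtype.ext rfl
    right_inv := fun e => Equiv.ext fun i => Subtype.ext rfl }
  rw [← Fintype.card_subtype, Fintype.card_congr e,
    Fintype.card_equiv (Fintype.equivOfCardEq hcard.symm), Fintype.card_fin]

lemma inj_sum {K : Type*} [Field K] (q : K) (k n : ℕ) :
    ∑ v ∈ Finset.univ.filter (fun v : Fin k → Fin n => Function.Injective v),
        q ^ (∑ i, (v i : ℕ)) =
      (k.factorial : K) * ∑ S ∈ (Finset.range n).powersetCard k, q ^ (∑ x ∈ S, x) := by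
  classical
  have hmaps : ∀ v ∈ Finset.univ.filter (fun v : Fin k → Fin n => Function.Injective v),
      Finset.image v Finset.univ ∈ (Finset.univ : Finset (Fin n)).powersetCard k := by
    intro v hv
    rw [Finset.mem_filter] at hv
    rw [Finset.mem_powersetCard]
    exact ⟨Finset.subset_univ _, by
      rw [Finset.card_image_of_injective _ hv.2, Finset.card_univ, Fintype.card_fin]⟩
  rw [← Finset.sum_fiberwise_of_maps_to hmaps]
  have hinner : ∀ S ∈ (Finset.univ : Finset (Fin n)).powersetCard k,
      ∑ v ∈ (Finset.univ.filter (fun v : Fin k → Fin n => Function.Injective v)).filter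
          (fun v => Finset.image v Finset.univ = S),
        q ^ (∑ i, (v i : ℕ)) = (k.factorial : K) * q ^ (∑ x ∈ S, (x : ℕ)) := by
    intro S hS
    rw [Finset.mem_powersetCard] at hS
    have h5 : ∀ v ∈ (Finset.univ.filter (fun v : Fin k → Fin n => Function.Injective v)).filter
        (fun v => Finset.image v Finset.univ = S),
        q ^ (∑ i, (v i : ℕ)) = q ^ (∑ x ∈ S, (x : ℕ)) := by
      intro v hv
      simp only [Finset.mem_filter, Finset.mem_univ, true_and] at hv
      congr 1
      rw [← hv.2, Finset.sum_image (fun a _ b _ hab => hv.1 hab)]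
    rw [Finset.sum_congr rfl h5, Finset.sum_const, Finset.filter_filter,
      fiber_card k n S hS.2, nsmul_eq_mul]
  rw [Finset.sum_congr rfl hinner, ← Finset.mul_sum]
  congr 1
  have hrange : (Finset.range n) = (Finset.univ : Finset (Fin n)).map Fin.valEmbedding := by
    rw [Fin.map_valEmbedding_univ, Nat.Iio_eq_range]
  rw [hrange, Finset.powersetCard_map, Finset.sum_map]
  refine Finset.sum_congr rfl fun S _ => ?_
  congr 1
  rw [show (Finset.mapEmbedding Fin.valEmbedding).toEmbedding S = S.map Fin.valEmbedding from rfl,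
    Finset.sum_map]
  rfl

/-- M_q(K_k,n) = k! binom(n,k)_q q^{k(k-1)/2}: the sum of q^{v_1+...+v_k} over
    k-tuples of pairwise distinct values in {0,...,n-1}. -/
theorem stmt7 {K : Type*} [Field K] (q : K) (k n : ℕ) (hkn : k ≤ n)
    (hq : ∀ i : ℕ, 1 ≤ i → i ≤ n → qInt q i ≠ 0) :
    ∑ v ∈ Finset.univ.filter (fun v : Fin k → Fin n => Function.Injective v),
        q ^ (∑ i, (v i : ℕ)) =
      (k.factorial : K) * qBinom q n k * q ^ (k * (k - 1) / 2) := by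
  rw [inj_sum, key_subsets q n k hkn hq, mul_assoc]
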